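/- Let Δ and Δ' be finite thick generalized quadrangles and φ : Δ → Δ' a GQ morphism mapping a geometrical hyperplane G of Δ surjectively onto a geometrical hyperplane G' of Δ' where G' is an ovoid of Δ'. Then φ is surjective. -/

import Mathlib

/-- Two points are collinear if they are incident with a common line. -/
def Collin {P L : Type} (inc : P → L → Prop) (x y : P) : Prop :=
  ∃ M, inc x M ∧ inc y M

/-- `inc` is the incidence relation of a generalized quadrangle:
two distinct points lie on at most one common line, for every non-incident
point-line pair `(x,l)` there is a unique point of `l` collinear with `x`,
and (from the order axiom) every point is on a line and every line has a point. -/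
def IsGQ {P L : Type} (inc : P → L → Prop) : Prop :=
  (∀ p q : P, ∀ l m : L, p ≠ q → inc p l → inc q l → inc p m → inc q m → l = m) ∧
  (∀ (x : P) (l : L), ¬ inc x l → ∃! y : P, inc y l ∧ Collin inc x y) ∧
  (∀ p : P, ∃ l, inc p l) ∧ (∀ l : L, ∃ p, inc p l)

/-- The incidence relation of the subgeometry induced on a set of points and
a set of lines. -/
def Rinc {P L : Type} (inc : P → L → Prop) (SP : Set P) (SL : Set L) :
    ↥SP → ↥SL → Prop :=
  fun p l => inc p.1 l.1

/-- The subgeometry `(SP, SL)` is full: every point of the ambient geometry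
incident with one of its lines belongs to it. -/
def IsFull {P L : Type} (inc : P → L → Prop) (SP : Set P) (SL : Set L) : Prop :=
  ∀ l ∈ SL, ∀ p, inc p l → p ∈ SP

/-- A set of points is an ovoid: every line is incident with exactly one of its
points. -/
def IsOvoid {P L : Type} (inc : P → L → Prop) (O : Set P) : Prop :=
  ∀ l : L, ∃! p, p ∈ O ∧ inc p l

/-- A geometry is thick if every point is incident with at least 3 lines and
every line is incident with at least 3 points. -/
def Thick {P L : Type} (inc : P → L → Prop) : Prop :=
  (∀ p : P, ∃ l m n : L, l ≠ m ∧ l ≠ n ∧ m ≠ n ∧ inc p l ∧ inc p m ∧ inc p n) ∧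
  (∀ l : L, ∃ p q r : P, p ≠ q ∧ p ≠ r ∧ q ≠ r ∧ inc p l ∧ inc q l ∧ inc r l)

/-- `(SP, SL)` is a geometrical hyperplane: every line of the geometry either
has all its points in `SP` (and is a line of `SL`), or has exactly one point
in `SP` (and is not a line of `SL`). -/
def IsHyperplane {P L : Type} (inc : P → L → Prop) (SP : Set P) (SL : Set L) : Prop :=
  ∀ l : L, (l ∈ SL ∧ ∀ p, inc p l → p ∈ SP) ∨ (l ∉ SL ∧ ∃! p, inc p l ∧ p ∈ SP)

lemma collin_symm {P L : Type} {inc : P → L → Prop} {x y : P}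
    (h : Collin inc x y) : Collin inc y x := by
  obtain ⟨m, h1, h2⟩ := h; exact ⟨m, h2, h1⟩

lemma pick_avoid1 {α : Type} {x y z p : α} (hxy : x ≠ y) (hxz : x ≠ z) (hyz : y ≠ z) :
    ∃ w, (w = x ∨ w = y ∨ w = z) ∧ w ≠ p := by
  by_cases h : x = p
  · exact ⟨y, Or.inr (Or.inl rfl), by rw [← h]; exact hxy.symm⟩
  · exact ⟨x, Or.inl rfl, h⟩

lemma pick_avoid2 {α : Type} {x y z p q : α} (hxy : x ≠ y) (hxz : x ≠ z) (hyz : y ≠ z) :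
    ∃ w, (w = x ∨ w = y ∨ w = z) ∧ w ≠ p ∧ w ≠ q := by
  by_cases h1 : x = p
  · by_cases h2 : y = q
    · exact ⟨z, Or.inr (Or.inr rfl), by rw [← h1]; exact hxz.symm, by rw [← h2]; exact hyz.symm⟩
    · exact ⟨y, Or.inr (Or.inl rfl), by rw [← h1]; exact hxy.symm, h2⟩
  · by_cases h2 : x = q
    · by_cases h3 : y = p
      · exact ⟨z, Or.inr (Or.inr rfl), by rw [← h3]; exact hyz.symm, by rw [← h2]; exact hxz.symm⟩
      · exact ⟨y, Or.inr (Or.inl rfl), h3, by rw [← h2]; exact hxy.symm⟩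
    · exact ⟨x, Or.inl rfl, h1, h2⟩

lemma pick_two_avoid1 {α : Type} {x y z p : α} (hxy : x ≠ y) (hxz : x ≠ z) (hyz : y ≠ z) :
    ∃ w v, w ≠ v ∧ (w = x ∨ w = y ∨ w = z) ∧ (v = x ∨ v = y ∨ v = z) ∧ w ≠ p ∧ v ≠ p := by
  by_cases h1 : x = p
  · exact ⟨y, z, hyz, Or.inr (Or.inl rfl), Or.inr (Or.inr rfl), by rw [← h1]; exact hxy.symm,
      by rw [← h1]; exact hxz.symm⟩
  · by_cases h2 : y = p
    · exact ⟨x, z, hxz, Or.inl rfl, Or.inr (Or.inr rfl), h1, by rw [← h2]; exact hyz.symm⟩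
    · exact ⟨x, y, hxy, Or.inl rfl, Or.inr (Or.inl rfl), h1, h2⟩

lemma proj_inj {Q M : Type} (r : Q → M → Prop) (PS : Set Q) (LS : Set M)
    (ax1 : ∀ ⦃a b : Q⦄ ⦃l m : M⦄, l ∈ LS → m ∈ LS → a ≠ b →
        r a l → r b l → r a m → r b m → l = m)
    (ax2e : ∀ ⦃a : Q⦄ ⦃l : M⦄, a ∈ PS → l ∈ LS → ¬ r a l →
        ∃ z, z ∈ PS ∧ r z l ∧ ∃ m, m ∈ LS ∧ r a m ∧ r z m)
    (ax2u : ∀ ⦃a : Q⦄ ⦃l : M⦄, l ∈ LS → ¬ r a l → ∀ y1 y2, r y1 l → r y2 l →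
        (∃ m, m ∈ LS ∧ r a m ∧ r y1 m) → (∃ m, m ∈ LS ∧ r a m ∧ r y2 m) → y1 = y2)
    {p q : Q} (hq : q ∈ PS)
    (hpq : ¬ ∃ m, m ∈ LS ∧ r p m ∧ r q m) :
    ∃ f : M → M, (∀ l, l ∈ LS → r p l → (f l ∈ LS ∧ r q (f l))) ∧
      ∀ l1 l2, l1 ∈ LS → r p l1 → l2 ∈ LS → r p l2 → f l1 = f l2 → l1 = l2 := by
  classical
  have hex : ∀ l, l ∈ LS → r p l → ∃ m, ((m ∈ LS ∧ r q m) ∧ ∃ z, r z l ∧ r z m) := by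
    intro l hl hpl
    have hql : ¬ r q l := fun h => hpq ⟨l, hl, hpl, h⟩
    obtain ⟨z, _, hzl, m, hm, hqm, hzm⟩ := ax2e hq hl hql
    exact ⟨m, ⟨hm, hqm⟩, z, hzl, hzm⟩
  choose! f hf using hex
  refine ⟨f, fun l hl hpl => (hf l hl hpl).1, ?_⟩
  intro l1 l2 hl1 hp1 hl2 hp2 hff
  by_contra hne
  obtain ⟨⟨hmLS, hqm⟩, z1, hz1l, hz1m⟩ := hf l1 hl1 hp1
  obtain ⟨⟨-, -⟩, z2, hz2l, hz2m⟩ := hf l2 hl2 hp2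
  rw [← hff] at hz2m
  have hz1p : z1 ≠ p := fun h => hpq ⟨f l1, hmLS, h ▸ hz1m, hqm⟩
  have hz2p : z2 ≠ p := fun h => hpq ⟨f l1, hmLS, h ▸ hz2m, hqm⟩
  by_cases hz : z1 = z2
  · exact hne (ax1 hl1 hl2 hz1p hz1l hp1 (hz ▸ hz2l) hp2)
  · have hpm : ¬ r p (f l1) := fun h => hpq ⟨f l1, hmLS, h, hqm⟩
    exact hz (ax2u hmLS hpm z1 z2 hz1m hz2m ⟨l1, hl1, hp1, hz1l⟩ ⟨l2, hl2, hp2, hz2l⟩)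

/-- if `φ = (fP, fL)` is a morphism between finite thick
generalized quadrangles mapping a geometrical hyperplane `G = (GP, GLn)` of
`Δ` surjectively onto a geometrical hyperplane `G' = (GP', GLn')` of `Δ'`
which is of ovoid type (type A), then `φ` is surjective. -/
theorem morphism_onto_ovoid_hyperplane_is_surjective
    {P L P' L' : Type} [Fintype P] [Fintype L] [Fintype P'] [Fintype L']
    (inc : P → L → Prop) (inc' : P' → L' → Prop)
    (hGQ : IsGQ inc) (hthick : Thick inc)
    (hGQ' : IsGQ inc') (hthick' : Thick inc')
    (fP : P → P') (fL : L → L')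
    (hmor : ∀ p l, inc p l → inc' (fP p) (fL l))
    (GP : Set P) (GLn : Set L) (hG : IsHyperplane inc GP GLn)
    (GP' : Set P') (GLn' : Set L') (hG' : IsHyperplane inc' GP' GLn')
    (hGLn' : GLn' = ∅) (hovoid : IsOvoid inc' GP')
    (himP : fP '' GP = GP') (himL : fL '' GLn = GLn') :
    Function.Surjective fP ∧ Function.Surjective fL := by
  classical
  obtain ⟨ax1, ax2, ax3, ax4⟩ := hGQ
  obtain ⟨ax1', ax2', ax3', ax4'⟩ := hGQ'
  obtain ⟨thickP', thickL'⟩ := hthick'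
  rcases isEmpty_or_nonempty L' with hE | hNE
  · refine ⟨fun x' => ?_, fun l' => (hE.false l').elim⟩
    obtain ⟨l', -⟩ := ax3' x'
    exact (hE.false l').elim
  -- notation
  set A : Set P' := Set.range fP with hA
  set Bs : Set L' := Set.range fL with hBs
  -- ovoid basics
  have hOp : ∀ {o : P'}, o ∈ GP' → o ∈ A := by
    intro o ho
    rw [← himP] at ho
    obtain ⟨p, -, hp⟩ := ho
    exact ⟨p, hp⟩
  have hOpair : ∀ {o1 o2 : P'}, o1 ∈ GP' → o2 ∈ GP' → o1 ≠ o2 → ¬ Collin inc' o1 o2 := by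
    rintro o1 o2 h1 h2 hne ⟨m, hm1, hm2⟩
    exact hne ((hovoid m).unique ⟨h1, hm1⟩ ⟨h2, hm2⟩)
  -- choice functions
  have hOptE : ∀ l : L', ∃ o, o ∈ GP' ∧ inc' o l := fun l => (hovoid l).exists
  choose Opt hOpt1 hOpt2 using hOptE
  have hCL : ∀ x y : P', Collin inc' x y → ∃ m, inc' x m ∧ inc' y m := fun x y h => h
  choose! lxy hlxy1 hlxy2 using hCL
  -- pencils
  set LA : P' → Finset L' := fun p => Finset.univ.filter (fun m => inc' p m) with hLA
  set BL : P' → Finset L' := fun p => Finset.univ.filter (fun m => m ∈ Bs ∧ inc' p m) with hBL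
  have memLA : ∀ {p : P'} {m : L'}, m ∈ LA p ↔ inc' p m := by
    intro p m; simp [hLA]
  have memBL : ∀ {p : P'} {m : L'}, m ∈ BL p ↔ m ∈ Bs ∧ inc' p m := by
    intro p m; simp [hBL]
  -- ambient axioms in relative form
  have ambax1 : ∀ ⦃a b : P'⦄ ⦃l m : L'⦄, l ∈ (Set.univ : Set L') → m ∈ (Set.univ : Set L') →
      a ≠ b → inc' a l → inc' b l → inc' a m → inc' b m → l = m :=
    fun a b l m _ _ h h1 h2 h3 h4 => ax1' a b l m h h1 h2 h3 h4
  have ambax2e : ∀ ⦃a : P'⦄ ⦃l : L'⦄, a ∈ (Set.univ : Set P') → l ∈ (Set.univ : Set L') →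
      ¬ inc' a l → ∃ z, z ∈ (Set.univ : Set P') ∧ inc' z l ∧
        ∃ m, m ∈ (Set.univ : Set L') ∧ inc' a m ∧ inc' z m := by
    intro a l _ _ hnl
    obtain ⟨y, ⟨hyl, hyc⟩, -⟩ := ax2' a l hnl
    obtain ⟨m, hm1, hm2⟩ := hyc
    exact ⟨y, trivial, hyl, m, trivial, hm1, hm2⟩
  have ambax2u : ∀ ⦃a : P'⦄ ⦃l : L'⦄, l ∈ (Set.univ : Set L') → ¬ inc' a l →
      ∀ y1 y2, inc' y1 l → inc' y2 l →
      (∃ m, m ∈ (Set.univ : Set L') ∧ inc' a m ∧ inc' y1 m) →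
      (∃ m, m ∈ (Set.univ : Set L') ∧ inc' a m ∧ inc' y2 m) → y1 = y2 := by
    intro a l _ hnl y1 y2 h1 h2 c1 c2
    obtain ⟨m1, -, u1, u2⟩ := c1
    obtain ⟨m2, -, v1, v2⟩ := c2
    exact (ax2' a l hnl).unique ⟨h1, m1, u1, u2⟩ ⟨h2, m2, v1, v2⟩
  -- equal ambient degrees for non-collinear points
  have AmbEqNC : ∀ p q : P', ¬ Collin inc' p q → (LA p).card = (LA q).card := by
    intro p q h
    have h1 : ¬ ∃ m, m ∈ (Set.univ : Set L') ∧ inc' p m ∧ inc' q m := by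
      rintro ⟨m, -, u1, u2⟩; exact h ⟨m, u1, u2⟩
    have h2 : ¬ ∃ m, m ∈ (Set.univ : Set L') ∧ inc' q m ∧ inc' p m := by
      rintro ⟨m, -, u1, u2⟩; exact h ⟨m, u2, u1⟩
    obtain ⟨f, hf1, hf2⟩ := proj_inj inc' Set.univ Set.univ ambax1 ambax2e ambax2u trivial h1
    obtain ⟨g, hg1, hg2⟩ := proj_inj inc' Set.univ Set.univ ambax1 ambax2e ambax2u trivial h2
    apply le_antisymm
    · apply Finset.card_le_card_of_injOn f
      · intro l hl
        exact memLA.mpr (hf1 l trivial (memLA.mp hl)).2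
      · intro l1 h1' l2 h2' hff
        exact hf2 l1 l2 trivial (memLA.mp h1') trivial (memLA.mp h2') hff
    · apply Finset.card_le_card_of_injOn g
      · intro l hl
        exact memLA.mpr (hg1 l trivial (memLA.mp hl)).2
      · intro l1 h1' l2 h2' hgg
        exact hg2 l1 l2 trivial (memLA.mp h1') trivial (memLA.mp h2') hgg
  -- all ambient degrees equal
  have AmbConst : ∀ p q : P', (LA p).card = (LA q).card := by
    intro p q
    by_cases hpq : p = q
    · rw [hpq]
    by_cases hc : Collin inc' p q
    · obtain ⟨l, hpl, hql⟩ := hc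
      obtain ⟨a, b, cc, hab, hac, hbc, ha, hb, hcc⟩ := thickL' l
      obtain ⟨r0, hr0or, hr0p, hr0q⟩ := pick_avoid2 hab hac hbc (p := p) (q := q)
      have hr0l : inc' r0 l := by rcases hr0or with rfl | rfl | rfl <;> assumption
      obtain ⟨n1, n2, n3, h12, h13, h23, hn1, hn2, hn3⟩ := thickP' r0
      obtain ⟨n, hnor, hnl⟩ := pick_avoid1 h12 h13 h23 (p := l)
      have hr0n : inc' r0 n := by rcases hnor with rfl | rfl | rfl <;> assumption
      obtain ⟨c1, c2, c3, g12, g13, g23, hc1, hc2, hc3⟩ := thickL' n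
      obtain ⟨x, hxor, hxr0⟩ := pick_avoid1 g12 g13 g23 (p := r0)
      have hxn : inc' x n := by rcases hxor with rfl | rfl | rfl <;> assumption
      have key : ∀ u : P', inc' u l → u ≠ r0 → ¬ Collin inc' x u := by
        intro u hul hur hcol
        have hun : ¬ inc' u n := fun h => hnl (ax1' u r0 n l hur h hr0n hul hr0l)
        have := (ax2' u n hun).unique ⟨hr0n, ⟨l, hul, hr0l⟩⟩ ⟨hxn, collin_symm hcol⟩
        exact hxr0 this.symm
      have hxp : ¬ Collin inc' p x := fun h => key p hpl (fun e => hr0p e.symm) (collin_symm h)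
      have hxq : ¬ Collin inc' x q := key q hql (fun e => hr0q e.symm)
      rw [AmbEqNC p x hxp, AmbEqNC x q hxq]
    · exact AmbEqNC p q hc
  -- base point of the ovoid
  obtain ⟨l'0⟩ := hNE
  haveI : Nonempty L' := ⟨l'0⟩
  set o0 : P' := Opt l'0 with ho0def
  have ho0 : o0 ∈ GP' := hOpt1 l'0
  set d : ℕ := (LA o0).card with hd
  have hd3 : 3 ≤ d := by
    obtain ⟨n1, n2, n3, h12, h13, h23, hn1, hn2, hn3⟩ := thickP' o0
    have hsub : ({n1, n2, n3} : Finset L') ⊆ LA o0 := by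
      intro m hm
      simp only [Finset.mem_insert, Finset.mem_singleton] at hm
      rcases hm with rfl | rfl | rfl <;> exact memLA.mpr (by assumption)
    have hcard : ({n1, n2, n3} : Finset L').card = 3 := by
      rw [Finset.card_insert_of_notMem (by simp [h12, h13]),
        Finset.card_insert_of_notMem (by simp [h23]), Finset.card_singleton]
    calc 3 = ({n1, n2, n3} : Finset L').card := hcard.symm
      _ ≤ (LA o0).card := Finset.card_le_card hsub
  -- the perp of o0
  set Zfin : Finset P' := Finset.univ.filter (fun z => z ≠ o0 ∧ Collin inc' o0 z) with hZfin
  have memZ : ∀ {z : P'}, z ∈ Zfin ↔ z ≠ o0 ∧ Collin inc' o0 z := by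
    intro z; simp [hZfin]
  -- lower bound on the perp size
  have hZ2 : 2 * d ≤ Zfin.card := by
    set PZ : Finset (L' × P') :=
      Finset.univ.filter (fun lz => inc' o0 lz.1 ∧ inc' lz.2 lz.1 ∧ lz.2 ≠ o0) with hPZ
    have hfib : PZ.card = ∑ m ∈ LA o0, (PZ.filter fun lz => lz.1 = m).card := by
      apply Finset.card_eq_sum_card_fiberwise
      intro x hx
      simp only [hPZ, Finset.coe_filter, Set.mem_setOf_eq, Finset.mem_filter, Finset.mem_univ, true_and] at hx
      exact memLA.mpr hx.1
    have hge : ∀ m ∈ LA o0, 2 ≤ (PZ.filter fun lz => lz.1 = m).card := by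
      intro m hm
      have hm' : inc' o0 m := memLA.mp hm
      obtain ⟨a, b, cc, hab, hac, hbc, ha, hb, hcc⟩ := thickL' m
      obtain ⟨w, v, hwv, hw, hv, hwp, hvp⟩ := pick_two_avoid1 hab hac hbc (p := o0)
      have hwm : inc' w m := by rcases hw with rfl | rfl | rfl <;> assumption
      have hvm : inc' v m := by rcases hv with rfl | rfl | rfl <;> assumption
      have hsub : ({(m, w), (m, v)} : Finset (L' × P')) ⊆ PZ.filter (fun lz => lz.1 = m) := by
        intro x hx
        rw [Finset.mem_insert, Finset.mem_singleton] at hx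
        rw [Finset.mem_filter, hPZ, Finset.mem_filter]
        rcases hx with rfl | rfl
        · exact ⟨⟨Finset.mem_univ _, hm', hwm, hwp⟩, rfl⟩
        · exact ⟨⟨Finset.mem_univ _, hm', hvm, hvp⟩, rfl⟩
      have hc2 : ({(m, w), (m, v)} : Finset (L' × P')).card = 2 := by
        rw [Finset.card_insert_of_notMem (by simp [hwv]), Finset.card_singleton]
      calc 2 = ({(m, w), (m, v)} : Finset (L' × P')).card := hc2.symm
        _ ≤ _ := Finset.card_le_card hsub
    have h1 : d * 2 ≤ PZ.card := by
      rw [hfib]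
      have := Finset.card_nsmul_le_sum (LA o0) (fun m => (PZ.filter fun lz => lz.1 = m).card) 2 hge
      simpa [smul_eq_mul] using this
    have h2 : PZ.card ≤ Zfin.card := by
      apply Finset.card_le_card_of_injOn (fun lz => lz.2)
      · intro x hx
        simp only [hPZ, Finset.coe_filter, Set.mem_setOf_eq, Finset.mem_filter, Finset.mem_univ, true_and] at hx
        exact memZ.mpr ⟨hx.2.2, ⟨x.1, hx.1, hx.2.1⟩⟩
      · rintro ⟨m1, z1⟩ hx ⟨m2, z2⟩ hy (h : z1 = z2)
        subst h
        simp only [hPZ, Finset.coe_filter, Set.mem_setOf_eq, Finset.mem_univ, true_and] at hx hy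
        have : m1 = m2 := ax1' z1 o0 m1 m2 hx.2.2 hx.2.1 hx.1 hy.2.1 hy.1
        rw [this]
    omega
  -- the ovoid as a finset
  set Ofin : Finset P' := Finset.univ.filter (fun o => o ∈ GP') with hOfin
  have memO : ∀ {o : P'}, o ∈ Ofin ↔ o ∈ GP' := by intro o; simp [hOfin]
  have ho0fin : o0 ∈ Ofin := memO.mpr ho0
  -- ambient pair count
  set Samb : Finset (P' × P') := Finset.univ.filter
    (fun oz => oz.1 ∈ GP' ∧ oz.1 ≠ o0 ∧ oz.2 ≠ o0 ∧ Collin inc' o0 oz.2 ∧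
      Collin inc' oz.1 oz.2) with hSamb
  have memSamb : ∀ {oz : P' × P'}, oz ∈ Samb ↔ oz.1 ∈ GP' ∧ oz.1 ≠ o0 ∧ oz.2 ≠ o0 ∧
      Collin inc' o0 oz.2 ∧ Collin inc' oz.1 oz.2 := by
    intro oz; simp [hSamb]
  -- lower bound: fiberwise over z
  have h3 : Zfin.card * (d - 1) ≤ Samb.card := by
    have hfib : Samb.card = ∑ z ∈ Zfin, (Samb.filter fun oz => oz.2 = z).card := by
      apply Finset.card_eq_sum_card_fiberwise
      intro x hx
      have hx' := memSamb.mp hx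
      exact memZ.mpr ⟨hx'.2.2.1, hx'.2.2.2.1⟩
    have hge : ∀ z ∈ Zfin, d - 1 ≤ (Samb.filter fun oz => oz.2 = z).card := by
      intro z hz
      obtain ⟨hzo0, hzcol⟩ := memZ.mp hz
      have hzG : z ∉ GP' := fun h => hOpair ho0 h (Ne.symm hzo0) hzcol
      have hl0a1 : inc' o0 (lxy o0 z) := hlxy1 o0 z hzcol
      have hl0a2 : inc' z (lxy o0 z) := hlxy2 o0 z hzcol
      have hl0mem : lxy o0 z ∈ LA z := memLA.mpr hl0a2
      have hcard : ((LA z).erase (lxy o0 z)).card = d - 1 := by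
        rw [Finset.card_erase_of_mem hl0mem, AmbConst z o0]
      rw [← hcard]
      apply Finset.card_le_card_of_injOn (fun m => (Opt m, z))
      · intro m hm
        obtain ⟨hmne, hmLA⟩ := Finset.mem_erase.mp hm
        have hzm : inc' z m := memLA.mp hmLA
        have ho0m : ¬ inc' o0 m := by
          intro h
          exact hmne (ax1' z o0 m (lxy o0 z) hzo0 hzm h hl0a2 hl0a1)
        have hOptne : Opt m ≠ o0 := fun h => ho0m (h ▸ hOpt2 m)
        refine Finset.mem_filter.mpr ⟨memSamb.mpr ⟨hOpt1 m, hOptne, hzo0, hzcol,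
          ⟨m, hOpt2 m, hzm⟩⟩, rfl⟩
      · intro m1 hm1 m2 hm2 heq
        simp only [Finset.coe_erase, Set.mem_diff, Finset.mem_coe] at hm1 hm2
        have h1 : Opt m1 = Opt m2 := congrArg Prod.fst heq
        have hOz : Opt m1 ≠ z := fun h => hzG (h ▸ hOpt1 m1)
        exact ax1' (Opt m1) z m1 m2 hOz (hOpt2 m1) (memLA.mp hm1.1)
          (h1 ▸ hOpt2 m2) (memLA.mp hm2.1)
    calc Zfin.card * (d - 1) = Zfin.card • (d - 1) := (smul_eq_mul _ _).symm
      _ ≤ ∑ z ∈ Zfin, (Samb.filter fun oz => oz.2 = z).card :=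
          Finset.card_nsmul_le_sum _ _ _ hge
      _ = Samb.card := hfib.symm
  -- upper bound: inject into (Ofin.erase o0) ×ˢ LA o0
  have h4 : Samb.card ≤ (Ofin.card - 1) * d := by
    have hcard : ((Ofin.erase o0) ×ˢ LA o0).card = (Ofin.card - 1) * d := by
      rw [Finset.card_product, Finset.card_erase_of_mem ho0fin]
    rw [← hcard]
    apply Finset.card_le_card_of_injOn (fun oz => (oz.1, lxy o0 oz.2))
    · intro oz hoz
      obtain ⟨hoG, hone, hzne, hzcol, hcol⟩ := memSamb.mp hoz
      refine Finset.mem_product.mpr ⟨Finset.mem_erase.mpr ⟨hone, memO.mpr hoG⟩,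
        memLA.mpr (hlxy1 o0 oz.2 hzcol)⟩
    · intro oz1 h1' oz2 h2' heq
      have hm1 := memSamb.mp (by exact_mod_cast h1' : oz1 ∈ Samb)
      have hm2 := memSamb.mp (by exact_mod_cast h2' : oz2 ∈ Samb)
      have ho : oz1.1 = oz2.1 := congrArg (Prod.fst : P' × L' → P') heq
      have hl : lxy o0 oz1.2 = lxy o0 oz2.2 := congrArg (Prod.snd : P' × L' → L') heq
      have hz1 : inc' oz1.2 (lxy o0 oz1.2) := hlxy2 o0 oz1.2 hm1.2.2.2.1
      have hz2 : inc' oz2.2 (lxy o0 oz1.2) := hl ▸ hlxy2 o0 oz2.2 hm2.2.2.2.1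
      have ho0l : inc' o0 (lxy o0 oz1.2) := hlxy1 o0 oz1.2 hm1.2.2.2.1
      have hnotinc : ¬ inc' oz1.1 (lxy o0 oz1.2) := by
        intro h
        exact hOpair hm1.1 ho0 hm1.2.1 ⟨lxy o0 oz1.2, h, ho0l⟩
      have hzz : oz1.2 = oz2.2 := by
        refine (ax2' oz1.1 (lxy o0 oz1.2) hnotinc).unique ⟨hz1, hm1.2.2.2.2⟩
          ⟨hz2, ho ▸ hm2.2.2.2.2⟩
      exact Prod.ext ho hzz
  -- size of the ovoid
  have hO1 : 2 * (d - 1) ≤ Ofin.card - 1 := by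
    have step : 2 * d * (d - 1) ≤ (Ofin.card - 1) * d := le_trans
      (by calc 2 * d * (d - 1) ≤ Zfin.card * (d - 1) :=
            Nat.mul_le_mul_right _ hZ2
          _ ≤ Samb.card := h3) h4
    have : (2 * (d - 1)) * d ≤ (Ofin.card - 1) * d := by
      calc (2 * (d - 1)) * d = 2 * d * (d - 1) := by ring
        _ ≤ (Ofin.card - 1) * d := step
    exact Nat.le_of_mul_le_mul_right this (by omega)
  have hObig : d + 2 ≤ Ofin.card := by omega
  -- image subgeometry axioms
  have Iax1 : ∀ ⦃a b : P'⦄ ⦃l m : L'⦄, l ∈ Bs → m ∈ Bs → a ≠ b →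
      inc' a l → inc' b l → inc' a m → inc' b m → l = m :=
    fun a b l m _ _ h h1 h2 h3 h4 => ax1' a b l m h h1 h2 h3 h4
  have Iax2e : ∀ ⦃a : P'⦄ ⦃l : L'⦄, a ∈ A → l ∈ Bs → ¬ inc' a l →
      ∃ z, z ∈ A ∧ inc' z l ∧ ∃ m, m ∈ Bs ∧ inc' a m ∧ inc' z m := by
    rintro a l ⟨p0, rfl⟩ ⟨l0, rfl⟩ hnl
    have hn0 : ¬ inc p0 l0 := fun h => hnl (hmor _ _ h)
    obtain ⟨y, ⟨hyl, hyc⟩, -⟩ := ax2 p0 l0 hn0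
    obtain ⟨m0, hm1, hm2⟩ := hyc
    exact ⟨fP y, ⟨y, rfl⟩, hmor _ _ hyl, fL m0, ⟨m0, rfl⟩, hmor _ _ hm1, hmor _ _ hm2⟩
  have Iax2u : ∀ ⦃a : P'⦄ ⦃l : L'⦄, l ∈ Bs → ¬ inc' a l →
      ∀ y1 y2, inc' y1 l → inc' y2 l →
      (∃ m, m ∈ Bs ∧ inc' a m ∧ inc' y1 m) →
      (∃ m, m ∈ Bs ∧ inc' a m ∧ inc' y2 m) → y1 = y2 := by
    intro a l _ hnl y1 y2 h1 h2 c1 c2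
    obtain ⟨m1, -, u1, u2⟩ := c1
    obtain ⟨m2, -, v1, v2⟩ := c2
    exact (ax2' a l hnl).unique ⟨h1, m1, u1, u2⟩ ⟨h2, m2, v1, v2⟩
  -- equal B-degrees for non-collinear points of A
  have ImEqNC : ∀ a b : P', a ∈ A → b ∈ A → ¬ Collin inc' a b →
      (BL a).card = (BL b).card := by
    intro a b ha hb h
    have h1 : ¬ ∃ m, m ∈ Bs ∧ inc' a m ∧ inc' b m := by
      rintro ⟨m, -, u1, u2⟩; exact h ⟨m, u1, u2⟩
    have h2 : ¬ ∃ m, m ∈ Bs ∧ inc' b m ∧ inc' a m := by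
      rintro ⟨m, -, u1, u2⟩; exact h ⟨m, u2, u1⟩
    obtain ⟨f, hf1, hf2⟩ := proj_inj inc' A Bs Iax1 Iax2e Iax2u hb h1
    obtain ⟨g, hg1, hg2⟩ := proj_inj inc' A Bs Iax1 Iax2e Iax2u ha h2
    apply le_antisymm
    · apply Finset.card_le_card_of_injOn f
      · intro l hl
        obtain ⟨hl1, hl2⟩ := memBL.mp hl
        exact memBL.mpr (hf1 l hl1 hl2)
      · intro l1 h1' l2 h2' hff
        obtain ⟨u1, u2⟩ := memBL.mp (by exact_mod_cast h1' : l1 ∈ BL a)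
        obtain ⟨v1, v2⟩ := memBL.mp (by exact_mod_cast h2' : l2 ∈ BL a)
        exact hf2 l1 l2 u1 u2 v1 v2 hff
    · apply Finset.card_le_card_of_injOn g
      · intro l hl
        obtain ⟨hl1, hl2⟩ := memBL.mp hl
        exact memBL.mpr (hg1 l hl1 hl2)
      · intro l1 h1' l2 h2' hgg
        obtain ⟨u1, u2⟩ := memBL.mp (by exact_mod_cast h1' : l1 ∈ BL b)
        obtain ⟨v1, v2⟩ := memBL.mp (by exact_mod_cast h2' : l2 ∈ BL b)
        exact hg2 l1 l2 u1 u2 v1 v2 hgg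
  -- for every point of A there is an ovoid point non-collinear with it
  have exists_noncol : ∀ x : P', x ∈ A → ∃ o, o ∈ GP' ∧ ¬ Collin inc' x o := by
    intro x hx
    by_cases hxO : x ∈ GP'
    · have h2 : 1 ≤ (Ofin.erase x).card := by
        rw [Finset.card_erase_of_mem (memO.mpr hxO)]; omega
      obtain ⟨o, ho⟩ := Finset.card_pos.mp (by omega : 0 < (Ofin.erase x).card)
      obtain ⟨hne, hoO⟩ := Finset.mem_erase.mp ho
      exact ⟨o, memO.mp hoO, fun h => hOpair hxO (memO.mp hoO) (Ne.symm hne) h⟩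
    · set Cfin : Finset P' := Ofin.filter (fun o => Collin inc' x o) with hCfin
      have hC : Cfin.card ≤ d := by
        have : Cfin.card ≤ (LA x).card := by
          apply Finset.card_le_card_of_injOn (fun o => lxy x o)
          · intro o ho
            have hcol := (Finset.mem_filter.mp ho).2
            exact memLA.mpr (hlxy1 x o hcol)
          · intro o1 ho1 o2 ho2 heq
            have hc1 := (Finset.mem_filter.mp (by exact_mod_cast ho1 : o1 ∈ Cfin))
            have hc2 := (Finset.mem_filter.mp (by exact_mod_cast ho2 : o2 ∈ Cfin))
            have hO1' : o1 ∈ GP' := memO.mp hc1.1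
            have hO2' : o2 ∈ GP' := memO.mp hc2.1
            have i1 : inc' o1 (lxy x o1) := hlxy2 x o1 hc1.2
            have heq' : lxy x o1 = lxy x o2 := heq
            have i2 : inc' o2 (lxy x o1) := heq' ▸ hlxy2 x o2 hc2.2
            exact (hovoid (lxy x o1)).unique ⟨hO1', i1⟩ ⟨hO2', i2⟩
        calc Cfin.card ≤ (LA x).card := this
          _ = d := AmbConst x o0
      have hlt : Cfin.card < Ofin.card := by omega
      by_contra hcon
      push_neg at hcon
      have hsub : Ofin ⊆ Cfin := by
        intro o ho
        exact Finset.mem_filter.mpr ⟨ho, hcon o (memO.mp ho)⟩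
      exact absurd (Finset.card_le_card hsub) (by omega)
  -- constancy of the B-degree
  set DB : ℕ := (BL o0).card with hDB
  have DBconst : ∀ x : P', x ∈ A → (BL x).card = DB := by
    intro x hx
    obtain ⟨o, hoG, hnc⟩ := exists_noncol x hx
    have h1 : (BL x).card = (BL o).card := ImEqNC x o hx (hOp hoG) hnc
    by_cases h : o = o0
    · rw [h1, h]
    · rw [h1]
      exact ImEqNC o o0 (hOp hoG) (hOp ho0) (hOpair hoG ho0 h)
  have hDB1 : 1 ≤ DB := by
    obtain ⟨p0, hp0⟩ := hOp ho0
    obtain ⟨lp, hlp⟩ := ax3 p0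
    have : fL lp ∈ BL o0 := memBL.mpr ⟨⟨lp, rfl⟩, hp0 ▸ hmor p0 lp hlp⟩
    have := Finset.card_pos.mpr ⟨fL lp, this⟩
    omega
  have hDBd : DB ≤ d := by
    apply Finset.card_le_card
    intro m hm
    exact memLA.mpr (memBL.mp hm).2
  -- image pair count
  set Simg : Finset (P' × P') := Finset.univ.filter
    (fun oz => oz.1 ∈ GP' ∧ oz.1 ≠ o0 ∧ oz.2 ∈ A ∧ oz.2 ≠ o0 ∧
      (∃ m, m ∈ Bs ∧ inc' o0 m ∧ inc' oz.2 m) ∧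
      (∃ m, m ∈ Bs ∧ inc' oz.1 m ∧ inc' oz.2 m)) with hSimg
  have memSimg : ∀ {oz : P' × P'}, oz ∈ Simg ↔ oz.1 ∈ GP' ∧ oz.1 ≠ o0 ∧ oz.2 ∈ A ∧
      oz.2 ≠ o0 ∧ (∃ m, m ∈ Bs ∧ inc' o0 m ∧ inc' oz.2 m) ∧
      (∃ m, m ∈ Bs ∧ inc' oz.1 m ∧ inc' oz.2 m) := by
    intro oz; simp [hSimg]
  -- lower bound for Simg
  have hexz : ∀ o : P', o ∈ GP' → o ≠ o0 → ∀ l : L', l ∈ Bs → inc' o0 l →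
      ∃ z, (z ∈ A ∧ inc' z l) ∧ ∃ m, m ∈ Bs ∧ inc' o m ∧ inc' z m := by
    intro o hoG hone l hlB ho0l
    have hnol : ¬ inc' o l := fun h => hOpair hoG ho0 hone ⟨l, h, ho0l⟩
    obtain ⟨z, hzA, hzl, m, hmB, hom, hzm⟩ := Iax2e (hOp hoG) hlB hnol
    exact ⟨z, ⟨hzA, hzl⟩, m, hmB, hom, hzm⟩
  choose! zf hzf using hexz
  have h1i : (Ofin.card - 1) * DB ≤ Simg.card := by
    have hcard : ((Ofin.erase o0) ×ˢ BL o0).card = (Ofin.card - 1) * DB := by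
      rw [Finset.card_product, Finset.card_erase_of_mem ho0fin]
    rw [← hcard]
    apply Finset.card_le_card_of_injOn (fun ol => (ol.1, zf ol.1 ol.2))
    · intro ol hol
      obtain ⟨ho', hl'⟩ := Finset.mem_product.mp hol
      obtain ⟨hone, hoO⟩ := Finset.mem_erase.mp ho'
      obtain ⟨hlB, ho0l⟩ := memBL.mp hl'
      obtain ⟨⟨hzA, hzl⟩, m, hmB, hom, hzm⟩ :=
        hzf ol.1 (memO.mp hoO) hone ol.2 hlB ho0l
      have hzo0 : zf ol.1 ol.2 ≠ o0 := by
        intro h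
        exact hOpair (memO.mp hoO) ho0 hone ⟨m, hom, h ▸ hzm⟩
      exact memSimg.mpr ⟨memO.mp hoO, hone, hzA, hzo0,
        ⟨ol.2, hlB, ho0l, hzl⟩, ⟨m, hmB, hom, hzm⟩⟩
    · intro ol1 h1' ol2 h2' heq
      obtain ⟨ho1', hl1'⟩ := Finset.mem_product.mp (by exact_mod_cast h1' :
        ol1 ∈ (Ofin.erase o0) ×ˢ BL o0)
      obtain ⟨ho2', hl2'⟩ := Finset.mem_product.mp (by exact_mod_cast h2' :
        ol2 ∈ (Ofin.erase o0) ×ˢ BL o0)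
      obtain ⟨hone1, hoO1⟩ := Finset.mem_erase.mp ho1'
      obtain ⟨hone2, hoO2⟩ := Finset.mem_erase.mp ho2'
      obtain ⟨hlB1, ho0l1⟩ := memBL.mp hl1'
      obtain ⟨hlB2, ho0l2⟩ := memBL.mp hl2'
      have ho : ol1.1 = ol2.1 := congrArg (Prod.fst : P' × P' → P') heq
      have hzeq : zf ol1.1 ol1.2 = zf ol2.1 ol2.2 := congrArg (Prod.snd : P' × P' → P') heq
      obtain ⟨⟨hzA1, hzl1⟩, m1, hmB1, hom1, hzm1⟩ :=
        hzf ol1.1 (memO.mp hoO1) hone1 ol1.2 hlB1 ho0l1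
      obtain ⟨⟨hzA2, hzl2⟩, m2, hmB2, hom2, hzm2⟩ :=
        hzf ol2.1 (memO.mp hoO2) hone2 ol2.2 hlB2 ho0l2
      have hzo0 : zf ol1.1 ol1.2 ≠ o0 := by
        intro h
        exact hOpair (memO.mp hoO1) ho0 hone1 ⟨m1, hom1, h ▸ hzm1⟩
      have hll : ol1.2 = ol2.2 := by
        refine ax1' (zf ol1.1 ol1.2) o0 ol1.2 ol2.2 hzo0 hzl1 ho0l1 ?_ ho0l2
        rw [hzeq]; exact hzl2
      exact Prod.ext ho hll
  -- upper bound for Simg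
  set Tfin : Finset P' := Finset.univ.filter
    (fun z => z ∈ A ∧ z ≠ o0 ∧ ∃ m, m ∈ Bs ∧ inc' o0 m ∧ inc' z m) with hTfin
  have memT : ∀ {z : P'}, z ∈ Tfin ↔ z ∈ A ∧ z ≠ o0 ∧
      ∃ m, m ∈ Bs ∧ inc' o0 m ∧ inc' z m := by
    intro z; simp [hTfin]
  have hexm : ∀ z : P', z ∈ Tfin → ∃ m, m ∈ Bs ∧ inc' o0 m ∧ inc' z m :=
    fun z hz => (memT.mp hz).2.2
  choose! l0B hl0B using hexm
  have hexm2 : ∀ oz : P' × P', oz ∈ Simg → ∃ m, m ∈ Bs ∧ inc' oz.1 m ∧ inc' oz.2 m :=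
    fun oz hoz => (memSimg.mp hoz).2.2.2.2.2
  choose! mB hmB using hexm2
  have h2i : Simg.card ≤ Zfin.card * (DB - 1) := by
    have hfib : Simg.card = ∑ z ∈ Tfin, (Simg.filter fun oz => oz.2 = z).card := by
      apply Finset.card_eq_sum_card_fiberwise
      intro x hx
      have hx' := memSimg.mp hx
      exact memT.mpr ⟨hx'.2.2.1, hx'.2.2.2.1, hx'.2.2.2.2.1⟩
    have hle : ∀ z ∈ Tfin, (Simg.filter fun oz => oz.2 = z).card ≤ DB - 1 := by
      intro z hz
      obtain ⟨hzA, hzo0, -⟩ := memT.mp hz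
      obtain ⟨hl0B1, hl0B2, hl0B3⟩ := hl0B z hz
      have hl0mem : l0B z ∈ BL z := memBL.mpr ⟨hl0B1, hl0B3⟩
      have hcard : ((BL z).erase (l0B z)).card = DB - 1 := by
        rw [Finset.card_erase_of_mem hl0mem, DBconst z hzA]
      rw [← hcard]
      apply Finset.card_le_card_of_injOn (fun oz => mB oz)
      · intro oz hoz
        obtain ⟨hozS, hoz2⟩ := Finset.mem_filter.mp hoz
        obtain ⟨hmB1, hmB2, hmB3⟩ := hmB oz hozS
        have hm' := memSimg.mp hozS
        refine Finset.mem_erase.mpr ⟨?_, memBL.mpr ⟨hmB1, hoz2 ▸ hmB3⟩⟩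
        intro h
        have ho0m : inc' o0 (mB oz) := by rw [show mB oz = l0B z from h]; exact hl0B2
        exact hm'.2.1 ((hovoid (mB oz)).unique ⟨hm'.1, hmB2⟩ ⟨ho0, ho0m⟩)
      · intro oz1 hoz1 oz2 hoz2 heq
        obtain ⟨hozS1, hz1⟩ := Finset.mem_filter.mp (by exact_mod_cast hoz1 :
          oz1 ∈ Simg.filter fun oz => oz.2 = z)
        obtain ⟨hozS2, hz2⟩ := Finset.mem_filter.mp (by exact_mod_cast hoz2 :
          oz2 ∈ Simg.filter fun oz => oz.2 = z)
        obtain ⟨hm11, hm12, hm13⟩ := hmB oz1 hozS1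
        obtain ⟨hm21, hm22, hm23⟩ := hmB oz2 hozS2
        have heq' : mB oz1 = mB oz2 := heq
        have hoeq : oz1.1 = oz2.1 := by
          refine (hovoid (mB oz1)).unique ⟨(memSimg.mp hozS1).1, hm12⟩
            ⟨(memSimg.mp hozS2).1, heq' ▸ hm22⟩
        exact Prod.ext hoeq (by rw [hz1, hz2])
    have hTZ : Tfin.card ≤ Zfin.card := by
      apply Finset.card_le_card
      intro z hz
      obtain ⟨-, hzo0, m, -, hm2, hm3⟩ := memT.mp hz
      exact memZ.mpr ⟨hzo0, ⟨m, hm2, hm3⟩⟩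
    calc Simg.card = ∑ z ∈ Tfin, (Simg.filter fun oz => oz.2 = z).card := hfib
      _ ≤ Tfin.card • (DB - 1) := Finset.sum_le_card_nsmul _ _ _ hle
      _ = Tfin.card * (DB - 1) := smul_eq_mul _ _
      _ ≤ Zfin.card * (DB - 1) := Nat.mul_le_mul_right _ hTZ
  -- conclude DB = d
  have hDBeq : DB = d := by
    obtain ⟨b, hb⟩ : ∃ b, DB = b + 1 := ⟨DB - 1, by omega⟩
    obtain ⟨c, hc⟩ : ∃ c, d = c + 1 := ⟨d - 1, by omega⟩
    set aa : ℕ := Ofin.card - 1 with haa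
    have haa0 : 0 < aa := by omega
    have e1 : DB - 1 = b := by omega
    have e2 : d - 1 = c := by omega
    have hAB : aa * (b + 1) ≤ Zfin.card * b := by
      calc aa * (b + 1) = aa * DB := by rw [hb]
        _ ≤ Simg.card := h1i
        _ ≤ Zfin.card * (DB - 1) := h2i
        _ = Zfin.card * b := by rw [e1]
    have hZC : Zfin.card * c ≤ aa * (c + 1) := by
      calc Zfin.card * c = Zfin.card * (d - 1) := by rw [e2]
        _ ≤ Samb.card := h3
        _ ≤ (Ofin.card - 1) * d := h4
        _ = aa * (c + 1) := by rw [← haa, ← hc]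
    have k1 : aa * ((b + 1) * c) ≤ aa * ((c + 1) * b) := by
      calc aa * ((b + 1) * c) = (aa * (b + 1)) * c := by ring
        _ ≤ (Zfin.card * b) * c := Nat.mul_le_mul_right _ hAB
        _ = (Zfin.card * c) * b := by ring
        _ ≤ (aa * (c + 1)) * b := Nat.mul_le_mul_right _ hZC
        _ = aa * ((c + 1) * b) := by ring
    have k2 : (b + 1) * c ≤ (c + 1) * b := Nat.le_of_mul_le_mul_left k1 haa0
    have k3 : b * c + c ≤ b * c + b := by
      calc b * c + c = (b + 1) * c := by ring
        _ ≤ (c + 1) * b := k2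
        _ = b * c + b := by ring
    have hcb : c ≤ b := by
      exact Nat.le_of_add_le_add_left k3
    omega
  -- every ambient line through an ovoid point is in the image
  have BLeq : ∀ o : P', o ∈ GP' → BL o = LA o := by
    intro o hoG
    apply Finset.eq_of_subset_of_card_le
    · intro m hm
      exact memLA.mpr (memBL.mp hm).2
    · have e1 : (LA o).card = d := AmbConst o o0
      have e2 : (BL o).card = DB := DBconst o (hOp hoG)
      rw [e1, e2, hDBeq]
  -- surjectivity of fL
  have fLsurj : Function.Surjective fL := by
    intro l'
    have h1 : l' ∈ LA (Opt l') := memLA.mpr (hOpt2 l')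
    rw [← BLeq (Opt l') (hOpt1 l')] at h1
    obtain ⟨hlB, -⟩ := memBL.mp h1
    exact hlB
  -- surjectivity of fP
  have fPsurj : Function.Surjective fP := by
    intro x'
    by_cases hx : x' ∈ GP'
    · exact hOp hx
    · obtain ⟨l1, hl1⟩ := ax3' x'
      have ho1G : Opt l1 ∈ GP' := hOpt1 l1
      have ho1l : inc' (Opt l1) l1 := hOpt2 l1
      have ho1x : Opt l1 ≠ x' := fun h => hx (h ▸ ho1G)
      obtain ⟨m1, m2, m3, h12, h13, h23, hm1, hm2, hm3⟩ := thickP' x'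
      obtain ⟨m', hm'or, hm'ne⟩ := pick_avoid1 h12 h13 h23 (p := l1)
      have hm'x : inc' x' m' := by rcases hm'or with rfl | rfl | rfl <;> assumption
      have ho1m' : ¬ inc' (Opt l1) m' := by
        intro h
        exact hm'ne (ax1' (Opt l1) x' m' l1 ho1x h hm'x ho1l hl1)
      have hm'B : m' ∈ Bs := fLsurj m'
      obtain ⟨z, hzA, hzm', m2', hm2B, ho1m2, hzm2⟩ := Iax2e (hOp ho1G) hm'B ho1m'
      have hz : z = x' := (ax2' (Opt l1) m' ho1m').unique
        ⟨hzm', ⟨m2', ho1m2, hzm2⟩⟩ ⟨hm'x, ⟨l1, ho1l, hl1⟩⟩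
      exact hz ▸ hzA
  exact ⟨fPsurj, fLsurj⟩
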